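/- In the 4×4 Rook's graph, the subgraph induced on the neighborhood of any vertex is a disjoint union of two triangles, whereas in the Shrikhande graph, the subgraph induced on the neighborhood of any vertex is a 6-cycle. Consequently the 4×4 Rook's graph and the Shrikhande graph are not isomorphic. -/

import Mathlib

/-- The 4×4 Rook's graph: `(x,y)` is adjacent to every other vertex in the same row or column. -/
def rook : SimpleGraph (ZMod 4 × ZMod 4) where
  Adj a b := a ≠ b ∧ (a.1 = b.1 ∨ a.2 = b.2)
  symm := ⟨fun _ _ h => ⟨h.1.symm, h.2.imp Eq.symm Eq.symm⟩⟩
  loopless := ⟨fun _ h => h.1 rfl⟩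

/-- The Shrikhande graph: `(x,y)` is adjacent to `(x±1,y)`, `(x,y±1)`, `(x±1,y±1)` (mod 4). -/
def shrikhande : SimpleGraph (ZMod 4 × ZMod 4) :=
  SimpleGraph.fromRel (fun a b =>
    b = a + ((1, 0) : ZMod 4 × ZMod 4) ∨ b = a + ((0, 1) : ZMod 4 × ZMod 4) ∨
    b = a + ((1, 1) : ZMod 4 × ZMod 4))

/-- The 6-cycle. -/
def C6 : SimpleGraph (ZMod 6) := SimpleGraph.fromRel (fun i j => j = i + 1)

/-- Two disjoint triangles. -/
def twoC3 : SimpleGraph (Fin 2 × ZMod 3) :=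
  SimpleGraph.fromRel (fun a b => a.1 = b.1 ∧ b.2 = a.2 + 1)

instance : DecidableRel rook.Adj := fun a b =>
  decidable_of_iff (a ≠ b ∧ (a.1 = b.1 ∨ a.2 = b.2)) Iff.rfl

instance : DecidableRel shrikhande.Adj := fun a b =>
  decidable_of_iff (a ≠ b ∧
    ((b = a + ((1, 0) : ZMod 4 × ZMod 4) ∨ b = a + ((0, 1) : ZMod 4 × ZMod 4) ∨
      b = a + ((1, 1) : ZMod 4 × ZMod 4)) ∨
     (a = b + ((1, 0) : ZMod 4 × ZMod 4) ∨ a = b + ((0, 1) : ZMod 4 × ZMod 4) ∨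
      a = b + ((1, 1) : ZMod 4 × ZMod 4)))) Iff.rfl

instance : DecidableRel C6.Adj := fun a b =>
  decidable_of_iff (a ≠ b ∧ ((b = a + 1) ∨ (a = b + 1))) Iff.rfl

instance : DecidableRel twoC3.Adj := fun a b =>
  decidable_of_iff (a ≠ b ∧ ((a.1 = b.1 ∧ b.2 = a.2 + 1) ∨ (b.1 = a.1 ∧ a.2 = b.2 + 1))) Iff.rfl

/-- translation invariance gives iso between induced neighborhoods -/
def transIso (G : SimpleGraph (ZMod 4 × ZMod 4))
    (h : ∀ a b v : ZMod 4 × ZMod 4, G.Adj (a + v) (b + v) ↔ G.Adj a b) (v : ZMod 4 × ZMod 4) :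
    G.induce (G.neighborSet 0) ≃g G.induce (G.neighborSet v) where
  toEquiv := (Equiv.addRight v).subtypeEquiv fun w => by
    simp only [SimpleGraph.mem_neighborSet, Equiv.coe_addRight]
    constructor
    · intro hw
      have := (h 0 w v).mpr hw
      rwa [zero_add] at this
    · intro hw
      have : G.Adj (0 + v) (w + v) := by rwa [zero_add]
      exact (h 0 w v).mp this
  map_rel_iff' := by
    intro a b
    exact h a b v

lemma hR : ∀ a b v : ZMod 4 × ZMod 4, rook.Adj (a + v) (b + v) ↔ rook.Adj a b := by decide

lemma hS : ∀ a b v : ZMod 4 × ZMod 4, shrikhande.Adj (a + v) (b + v) ↔ shrikhande.Adj a b := by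
  decide

def fR : Fin 2 × ZMod 3 → ZMod 4 × ZMod 4 := fun p =>
  if p.1 = 0 then (((p.2.val + 1 : ℕ) : ZMod 4), 0) else (0, ((p.2.val + 1 : ℕ) : ZMod 4))

lemma fR_mem : ∀ a, fR a ∈ rook.neighborSet 0 := by decide

noncomputable def e1 : twoC3 ≃g rook.induce (rook.neighborSet (0 : ZMod 4 × ZMod 4)) where
  toEquiv := Equiv.ofBijective (fun a => ⟨fR a, fR_mem a⟩)
    (by decide)
  map_rel_iff' := by
    intro a b
    show rook.Adj (fR a) (fR b) ↔ twoC3.Adj a b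
    revert a b; decide

def fS : ZMod 6 → ZMod 4 × ZMod 4 := fun i =>
  ![((1:ZMod 4),(0:ZMod 4)),(1,1),(0,1),(3,0),(3,3),(0,3)] i

lemma fS_mem : ∀ a, fS a ∈ shrikhande.neighborSet 0 := by decide

noncomputable def e2 : C6 ≃g shrikhande.induce (shrikhande.neighborSet (0 : ZMod 4 × ZMod 4)) where
  toEquiv := Equiv.ofBijective (fun a => ⟨fS a, fS_mem a⟩)
    (by decide)
  map_rel_iff' := by
    intro a b
    show shrikhande.Adj (fS a) (fS b) ↔ C6.Adj a b
    revert a b; decide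

def isoInduceNeighbor {V W : Type*} {G : SimpleGraph V} {G' : SimpleGraph W} (f : G ≃g G')
    (v : V) : G.induce (G.neighborSet v) ≃g G'.induce (G'.neighborSet (f v)) where
  toEquiv := f.toEquiv.subtypeEquiv fun w => by
    simp only [SimpleGraph.mem_neighborSet]
    exact f.map_adj_iff.symm
  map_rel_iff' := by
    intro a b
    exact f.map_adj_iff

theorem stmt19 :
    (∀ v, Nonempty (rook.induce (rook.neighborSet v) ≃g twoC3)) ∧
    (∀ v, Nonempty (shrikhande.induce (shrikhande.neighborSet v) ≃g C6)) ∧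
    IsEmpty (rook ≃g shrikhande) := by
  refine ⟨fun v => ⟨(e1.trans (transIso rook hR v)).symm⟩,
    fun v => ⟨(e2.trans (transIso shrikhande hS v)).symm⟩, ⟨fun f => ?_⟩⟩
  have g : twoC3 ≃g C6 :=
    e1.trans ((isoInduceNeighbor f 0).trans
      (((transIso shrikhande hS (f 0)).symm).trans e2.symm))
  have htri : ∀ x y z : ZMod 6, ¬(C6.Adj x y ∧ C6.Adj y z ∧ C6.Adj x z) := by decide
  have h1 : C6.Adj (g (0, 0)) (g (0, 1)) := g.map_adj_iff.mpr (by decide)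
  have h2 : C6.Adj (g (0, 1)) (g (0, 2)) := g.map_adj_iff.mpr (by decide)
  have h3 : C6.Adj (g (0, 0)) (g (0, 2)) := g.map_adj_iff.mpr (by decide)
  exact htri _ _ _ ⟨h1, h2, h3⟩
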